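/- Let j, k ≥ 1 be integers, let c, z ∈ ℂ, and for real r > 1 set P_r = ∏_{n=1}^{∞} exp( c · ((r^k − 1)^{1/k} · z / r^n)^j ), where (r^k − 1)^{1/k} is the positive real k-th root (this product converges for every r > 1). Then as r → 1 from above: (i) if j = k, then P_r → exp(c·z^k); (ii) if j > k or c = 0, then P_r → 1; (iii) if j < k and Re(c·z^j) < 0, then P_r → 0; (iv) if j < k and Re(c·z^j) > 0, then |P_r| → ∞. (Function Factor Cutoff Tool: letting r ↓ 1 nullifies function factors of order higher than k and isolates the order-k factor.) -/

import Mathlib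

open Topology

/-- `P_r = ∏_{n=1}^∞ exp (c * ((r^k - 1)^{1/k} * z / r^n)^j)` with the positive real
`k`-th root: the geometric sampling product `P(f_j, {k}, z)` of the function factor
`f_j(w) = exp (c w^j)` over the sequence generated by `k` with real ratio `r`. -/
noncomputable def Pr (j k : ℕ) (c z : ℂ) (r : ℝ) : ℂ :=
  ∏' n : ℕ+,
    Complex.exp (c * ((((r ^ k - 1) ^ ((k : ℝ))⁻¹ : ℝ) : ℂ) * z / (r : ℂ) ^ (n : ℕ)) ^ j)

open Filter

noncomputable def Sfun (j k : ℕ) (r : ℝ) : ℝ := (r ^ k - 1) ^ ((j : ℝ) / (k : ℝ)) / (r ^ j - 1)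

lemma hbpos {k : ℕ} (hk : 1 ≤ k) {r : ℝ} (hr : 1 < r) : 0 < r ^ k - 1 :=
  sub_pos.2 (one_lt_pow₀ hr (by omega))

lemma tendsto_base (k : ℕ) : Tendsto (fun r : ℝ => r ^ k - 1) (𝓝[>] 1) (𝓝 0) := by
  have h : Tendsto (fun r : ℝ => r ^ k - 1) (𝓝 1) (𝓝 0) := by
    have h0 : Continuous (fun r : ℝ => r ^ k - 1) := by continuity
    simpa using h0.tendsto 1
  exact h.mono_left nhdsWithin_le_nhds

lemma tendsto_rpow0 {a : ℝ} (ha : 0 < a) (k : ℕ) :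
    Tendsto (fun r : ℝ => (r ^ k - 1) ^ a) (𝓝[>] 1) (𝓝 0) := by
  have h := (Real.continuousAt_rpow_const 0 a (Or.inr ha.le)).tendsto.comp (tendsto_base k)
  simpa [Function.comp_def, Real.zero_rpow ha.ne'] using h

lemma tendsto_rpow_top {a : ℝ} (ha : a < 0) {k : ℕ} (hk : 1 ≤ k) :
    Tendsto (fun r : ℝ => (r ^ k - 1) ^ a) (𝓝[>] 1) atTop := by
  have h1 : Tendsto (fun r : ℝ => (r ^ k - 1) ^ (-a)) (𝓝[>] 1) (𝓝[>] 0) := by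
    refine tendsto_nhdsWithin_iff.2 ⟨tendsto_rpow0 (neg_pos.2 ha) k, ?_⟩
    filter_upwards [self_mem_nhdsWithin] with r hr
    exact Real.rpow_pos_of_pos (hbpos hk hr) _
  refine h1.inv_tendsto_nhdsGT_zero.congr' ?_
  filter_upwards [self_mem_nhdsWithin] with r hr
  simp only [Pi.inv_apply]
  rw [← Real.rpow_neg (hbpos hk hr).le, neg_neg]

lemma S_tendsto_zero {j k : ℕ} (hk : 1 ≤ k) (hkj : k < j) :
    Tendsto (Sfun j k) (𝓝[>] 1) (𝓝 0) := by
  have hk0 : (0:ℝ) < (k:ℝ) := by exact_mod_cast hk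
  have ha : (0:ℝ) < (j:ℝ)/(k:ℝ) - 1 := by
    have : (1:ℝ) < (j:ℝ)/(k:ℝ) := (one_lt_div hk0).2 (by exact_mod_cast hkj)
    linarith
  refine tendsto_of_tendsto_of_tendsto_of_le_of_le' tendsto_const_nhds (tendsto_rpow0 ha k)
    ?_ ?_
  · filter_upwards [self_mem_nhdsWithin] with r hr
    exact div_nonneg (Real.rpow_nonneg (hbpos hk hr).le _) (hbpos (by omega) hr).le
  · filter_upwards [self_mem_nhdsWithin] with r hr
    have hb := hbpos hk hr
    have hkj' : r ^ k - 1 ≤ r ^ j - 1 :=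
      sub_le_sub_right (pow_le_pow_right₀ (le_of_lt hr) hkj.le) 1
    calc Sfun j k r ≤ (r ^ k - 1) ^ ((j:ℝ)/(k:ℝ)) / (r ^ k - 1) := by
          unfold Sfun; gcongr
      _ = (r ^ k - 1) ^ ((j:ℝ)/(k:ℝ) - 1) := by
          rw [Real.rpow_sub hb, Real.rpow_one]

lemma S_tendsto_top {j k : ℕ} (hj : 1 ≤ j) (hjk : j < k) :
    Tendsto (Sfun j k) (𝓝[>] 1) atTop := by
  have hk : 1 ≤ k := by omega
  have hk0 : (0:ℝ) < (k:ℝ) := by exact_mod_cast hk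
  have ha : (j:ℝ)/(k:ℝ) - 1 < 0 := by
    have : (j:ℝ)/(k:ℝ) < 1 := (div_lt_one hk0).2 (by exact_mod_cast hjk)
    linarith
  refine tendsto_atTop_mono' _ ?_ (tendsto_rpow_top ha hk)
  filter_upwards [self_mem_nhdsWithin] with r hr
  have hb := hbpos hk hr
  have hbj := hbpos hj hr
  have hjk' : r ^ j - 1 ≤ r ^ k - 1 :=
    sub_le_sub_right (pow_le_pow_right₀ (le_of_lt hr) hjk.le) 1
  calc (r ^ k - 1) ^ ((j:ℝ)/(k:ℝ) - 1)
      = (r ^ k - 1) ^ ((j:ℝ)/(k:ℝ)) / (r ^ k - 1) := by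
        rw [Real.rpow_sub hb, Real.rpow_one]
    _ ≤ Sfun j k r := by
        unfold Sfun; gcongr

lemma key_hasSum (j k : ℕ) (hj : 1 ≤ j) (c z : ℂ) {r : ℝ} (hr : 1 < r) :
    HasSum (fun n : ℕ+ =>
        c * ((((r ^ k - 1) ^ ((k : ℝ))⁻¹ : ℝ) : ℂ) * z / (r : ℂ) ^ (n : ℕ)) ^ j)
      (c * ((((r ^ k - 1) ^ ((k : ℝ))⁻¹ : ℝ) : ℂ) * z) ^ j / ((r : ℂ) ^ j - 1)) := by
  set A : ℂ := (((r ^ k - 1) ^ ((k : ℝ))⁻¹ : ℝ) : ℂ) with hA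
  set q : ℂ := ((r : ℂ)⁻¹) ^ j with hqdef
  have hr0 : (0:ℝ) < r := lt_trans one_pos hr
  have hrC : (r : ℂ) ≠ 0 := by exact_mod_cast hr0.ne'
  have hq : ‖q‖ < 1 := by
    rw [hqdef, norm_pow, norm_inv, Complex.norm_real, Real.norm_of_nonneg hr0.le]
    exact pow_lt_one₀ (by positivity) (by rw [inv_lt_one_iff₀]; right; exact hr) (by omega)
  have hq1 : (1 : ℂ) - q ≠ 0 := by
    intro h
    have : q = 1 := by linear_combination -h
    rw [this] at hq; simp at hq
  have hs : HasSum (fun n : ℕ => (c * (A * z) ^ j * q) * q ^ n)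
      ((c * (A * z) ^ j * q) * (1 - q)⁻¹) :=
    (hasSum_geometric_of_norm_lt_one hq).mul_left _
  have hfun : ∀ n : ℕ, (c * (A * z) ^ j * q) * q ^ n
      = c * (A * z / (r : ℂ) ^ ((n.succPNat : ℕ+) : ℕ)) ^ j := by
    intro n
    have h1 : ((n.succPNat : ℕ+) : ℕ) = n + 1 := rfl
    rw [h1, hqdef, div_pow, div_eq_mul_inv, ← pow_mul, ← inv_pow]
    ring
  have hval : (c * (A * z) ^ j * q) * (1 - q)⁻¹ = c * (A * z) ^ j / ((r : ℂ) ^ j - 1) := by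
    have hrj : (r : ℂ) ^ j ≠ 0 := pow_ne_zero _ hrC
    rw [hqdef] at hq1 ⊢
    rw [inv_pow] at hq1 ⊢
    field_simp
  rw [← hval]
  refine (Equiv.pnatEquivNat.symm.hasSum_iff).1 ?_
  exact hs.congr_fun fun n => by
    simpa using (hfun n).symm

lemma Pr_eq (j k : ℕ) (hj : 1 ≤ j) (hk : 1 ≤ k) (c z : ℂ) {r : ℝ} (hr : 1 < r) :
    Pr j k c z r = Complex.exp (c * z ^ j * ((Sfun j k r : ℝ) : ℂ)) := by
  have hp := (key_hasSum j k hj c z hr).cexp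
  have h1 : Pr j k c z r
      = Complex.exp (c * ((((r ^ k - 1) ^ ((k : ℝ))⁻¹ : ℝ) : ℂ) * z) ^ j / ((r : ℂ) ^ j - 1)) :=
    hp.tprod_eq
  rw [h1]
  congr 1
  have hb := hbpos hk hr
  have hAj : ((r ^ k - 1) ^ ((k : ℝ))⁻¹) ^ j = (r ^ k - 1) ^ ((j:ℝ)/(k:ℝ)) := by
    rw [← Real.rpow_natCast ((r ^ k - 1) ^ ((k : ℝ))⁻¹) j, ← Real.rpow_mul hb.le,
      inv_mul_eq_div]
  have hd : (r : ℝ) ^ j - 1 ≠ 0 := (hbpos hj hr).ne'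
  have hdC : ((r : ℂ)) ^ j - 1 ≠ 0 := by
    have h2 : ((r ^ j - 1 : ℝ) : ℂ) ≠ 0 := by exact_mod_cast hd
    push_cast at h2
    exact h2
  unfold Sfun
  rw [← hAj]
  push_cast
  field_simp
  ring

lemma re_mul_ofReal (w : ℂ) (t : ℝ) : (w * (t : ℂ)).re = w.re * t := by
  simp [Complex.mul_re]

/-- Function Factor Cutoff Tool: the product `P_r` converges for every
`r > 1`, and as `r → 1⁺`: (i) if `j = k` then `P_r → exp (c z^k)`; (ii) if `j > k` or
`c = 0` then `P_r → 1`; (iii) if `j < k` and `Re (c z^j) < 0` then `P_r → 0`;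
(iv) if `j < k` and `Re (c z^j) > 0` then `|P_r| → ∞`. -/
theorem stmt_6 (j k : ℕ) (hj : 1 ≤ j) (hk : 1 ≤ k) (c z : ℂ) :
    (∀ r : ℝ, 1 < r →
      Multipliable (fun n : ℕ+ =>
        Complex.exp
          (c * ((((r ^ k - 1) ^ ((k : ℝ))⁻¹ : ℝ) : ℂ) * z / (r : ℂ) ^ (n : ℕ)) ^ j))) ∧
    (j = k →
      Filter.Tendsto (fun r : ℝ => Pr j k c z r) (𝓝[>] (1 : ℝ))
        (𝓝 (Complex.exp (c * z ^ k)))) ∧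
    (k < j ∨ c = 0 →
      Filter.Tendsto (fun r : ℝ => Pr j k c z r) (𝓝[>] (1 : ℝ)) (𝓝 1)) ∧
    (j < k → (c * z ^ j).re < 0 →
      Filter.Tendsto (fun r : ℝ => Pr j k c z r) (𝓝[>] (1 : ℝ)) (𝓝 0)) ∧
    (j < k → 0 < (c * z ^ j).re →
      Filter.Tendsto (fun r : ℝ => ‖Pr j k c z r‖) (𝓝[>] (1 : ℝ))
        Filter.atTop) := by
  refine ⟨fun r hr => ((key_hasSum j k hj c z hr).cexp).multipliable, ?_, ?_, ?_, ?_⟩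
  · -- (i) j = k
    rintro rfl
    refine tendsto_const_nhds.congr' ?_
    filter_upwards [self_mem_nhdsWithin] with r hr
    have hb := hbpos hk hr
    have hj0 : (j:ℝ) ≠ 0 := by exact_mod_cast (by omega : j ≠ 0)
    have hS : Sfun j j r = 1 := by
      unfold Sfun
      rw [div_self hj0, Real.rpow_one, div_self hb.ne']
    rw [Pr_eq j j hj hj c z hr, hS]
    simp
  · -- (ii) k < j or c = 0
    rintro (hkj | rfl)
    · have hS := S_tendsto_zero hk hkj
      have h2 : Tendsto (fun r => c * z ^ j * ((Sfun j k r : ℝ) : ℂ)) (𝓝[>] 1) (𝓝 0) := by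
        have h3 : Tendsto (fun r => ((Sfun j k r : ℝ) : ℂ)) (𝓝[>] 1) (𝓝 0) := by
          have := (Complex.continuous_ofReal.tendsto 0).comp hS
          simpa [Function.comp_def] using this
        simpa using h3.const_mul (c * z ^ j)
      have h4 := (Complex.continuous_exp.tendsto 0).comp h2
      rw [Complex.exp_zero] at h4
      refine h4.congr' ?_
      filter_upwards [self_mem_nhdsWithin] with r hr
      exact (Pr_eq j k hj hk c z hr).symm
    · refine tendsto_const_nhds.congr' ?_
      filter_upwards [self_mem_nhdsWithin] with r hr
      rw [Pr_eq j k hj hk 0 z hr]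
      simp
  · -- (iii)
    intro hjk hneg
    have hS := S_tendsto_top hj hjk
    have hre : Tendsto (fun r => (c * z ^ j * ((Sfun j k r : ℝ) : ℂ)).re) (𝓝[>] 1) atBot := by
      simp only [re_mul_ofReal]
      exact (tendsto_const_mul_atBot_of_neg hneg).2 hS
    rw [tendsto_zero_iff_norm_tendsto_zero]
    have h5 := Real.tendsto_exp_atBot.comp hre
    refine h5.congr' ?_
    filter_upwards [self_mem_nhdsWithin] with r hr
    rw [Pr_eq j k hj hk c z hr]
    simp [Complex.norm_exp]
  · -- (iv)
    intro hjk hpos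
    have hS := S_tendsto_top hj hjk
    have hre : Tendsto (fun r => (c * z ^ j * ((Sfun j k r : ℝ) : ℂ)).re) (𝓝[>] 1) atTop := by
      simp only [re_mul_ofReal]
      exact hS.const_mul_atTop hpos
    have h5 := Real.tendsto_exp_atTop.comp hre
    refine h5.congr' ?_
    filter_upwards [self_mem_nhdsWithin] with r hr
    rw [Function.comp_apply, Pr_eq j k hj hk c z hr, Complex.norm_exp]
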